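/- Let n > 2, m = ⌊n/2⌋, and δ = 1 if n is even, δ = 0 if n is odd. Then the permutation ℓ_n admits the explicit factorization ℓ_n = (∏_{i=1}^{m−δ} (X · L^{(−1)^{i−1}})^i) · (∏_{i=m−1}^{1} (L^{(−1)^{i−δ}} · X)^i) · R^m into LRX generators (the first product over i = 1, 2, …, m−δ, the second over i = m−1, m−2, …, 1, with L^{−1} = R, and with a fixed consistent composition convention for products of permutations). The total number of generator letters in this factorization is (m−δ)(m−δ+1) + m(m−1) + m = n(n−1)/2. -/

import Mathlib

/- Auxiliary development for the LRX factorization of `ℓ_n`. -/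

namespace LRXAux

/-- The cycle `c = X * L` (fixes `0`, rotates `1,…,n-1`). -/
def cP (n : ℕ) : Equiv.Perm (ZMod n) :=
  Equiv.swap 0 1 * Equiv.addRight 1

/-- The cycle `d = X * L⁻¹` (fixes `1`, rotates `0,2,3,…,n-1` downwards). -/
def dP (n : ℕ) : Equiv.Perm (ZMod n) :=
  Equiv.swap 0 1 * (Equiv.addRight (1 : ZMod n))⁻¹

/-- Residual permutation after an even number `r = 2b` of steps. -/
def WE (n m b : ℕ) : ZMod n → ZMod n := fun x =>
  if (x - ((n - m - b : ℕ) : ZMod n)).val ≤ 2 * b then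
    x + ((m + b + 1 : ℕ) : ZMod n)
  else (((b + 1 : ℕ) : ZMod n) - (m : ZMod n)) - x

/-- Residual permutation after an odd number `r = 2b+1` of steps. -/
def WO (n m b : ℕ) : ZMod n → ZMod n := fun x =>
  if (x - ((n - m - b : ℕ) : ZMod n)).val ≤ 2 * b + 1 then
    x + ((m - 1 - b : ℕ) : ZMod n)
  else ((n - m - b : ℕ) : ZMod n) - x

/-- Residual permutation after `r` steps. -/
def Wgen (n m r : ℕ) : ZMod n → ZMod n :=
  if r % 2 = 0 then WE n m (r / 2) else WO n m (r / 2)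

lemma Wgen_even (n m b : ℕ) : Wgen n m (2 * b) = WE n m b := by
  have h1 : (2 * b) % 2 = 0 := by omega
  have h2 : (2 * b) / 2 = b := by omega
  simp [Wgen, h1, h2]

lemma Wgen_odd (n m b : ℕ) : Wgen n m (2 * b + 1) = WO n m b := by
  have h1 : (2 * b + 1) % 2 = 1 := by omega
  have h2 : (2 * b + 1) / 2 = b := by omega
  simp [Wgen, h1, h2]

lemma swap01_cast (n j : ℕ) (hn : 2 < n) (h2 : 2 ≤ j) (hj : j ≤ n - 1) :
    Equiv.swap (0 : ZMod n) 1 ((j : ℕ) : ZMod n) = ((j : ℕ) : ZMod n) := by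
  haveI : NeZero n := ⟨by omega⟩
  apply Equiv.swap_apply_of_ne_of_ne
  · intro h
    have := ZMod.val_cast_of_lt (show j < n by omega)
    rw [h, ZMod.val_zero] at this; omega
  · intro h
    have h1 : ((j : ℕ) : ZMod n) = ((1 : ℕ) : ZMod n) := by rw [h, Nat.cast_one]
    have := ZMod.val_cast_of_lt (show j < n by omega)
    rw [h1, ZMod.val_cast_of_lt (show 1 < n by omega)] at this; omega

lemma c_cast (n j : ℕ) (hn : 2 < n) (h1 : 1 ≤ j) (hj : j ≤ n - 2) :
    cP n ((j : ℕ) : ZMod n) = ((j + 1 : ℕ) : ZMod n) := by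
  unfold cP
  rw [Equiv.Perm.mul_apply]
  have : (Equiv.addRight (1 : ZMod n)) ((j : ℕ) : ZMod n) = ((j + 1 : ℕ) : ZMod n) := by
    simp only [Equiv.coe_addRight]
    push_cast
    ring
  rw [this]
  exact swap01_cast n (j + 1) hn (by omega) (by omega)

lemma c_zero (n : ℕ) (hn : 2 < n) : cP n (0 : ZMod n) = 0 := by
  unfold cP
  rw [Equiv.Perm.mul_apply]
  have : (Equiv.addRight (1 : ZMod n)) 0 = 1 := by simp
  rw [this, Equiv.swap_apply_right]

lemma c_top (n : ℕ) (hn : 2 < n) : cP n (((n - 1 : ℕ) : ZMod n)) = 1 := by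
  unfold cP
  rw [Equiv.Perm.mul_apply]
  have : (Equiv.addRight (1 : ZMod n)) ((n - 1 : ℕ) : ZMod n) = 0 := by
    have : ((n - 1 : ℕ) : ZMod n) + 1 = ((n : ℕ) : ZMod n) := by
      push_cast [Nat.cast_sub (show 1 ≤ n by omega)]; ring
    simp only [Equiv.coe_addRight]
    rw [this, ZMod.natCast_self]
  rw [this, Equiv.swap_apply_left]

lemma cpow_zero (n k : ℕ) (hn : 2 < n) : ((cP n) ^ k) (0 : ZMod n) = 0 := by
  induction k with
  | zero => simp
  | succ k ih => rw [pow_succ', Equiv.Perm.mul_apply, ih, c_zero n hn]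

lemma cpow_lt (n : ℕ) (hn : 2 < n) (k : ℕ) :
    ∀ j : ℕ, 1 ≤ j → j + k ≤ n - 1 → ((cP n) ^ k) ((j : ℕ) : ZMod n) = ((j + k : ℕ) : ZMod n) := by
  induction k with
  | zero => intro j _ _; simp
  | succ k ih =>
    intro j h1 h2
    rw [pow_succ, Equiv.Perm.mul_apply, c_cast n j hn h1 (by omega)]
    have := ih (j + 1) (by omega) (by omega)
    rw [this]
    congr 1
    omega

lemma cpow_wrap (n : ℕ) (hn : 2 < n) (k j : ℕ) (h1 : 1 ≤ j) (hj : j ≤ n - 1)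
    (h2 : n ≤ j + k) (h3 : j + k + 2 ≤ 2 * n) :
    ((cP n) ^ k) ((j : ℕ) : ZMod n) = ((j + k + 1 - n : ℕ) : ZMod n) := by
  have hk : k = (k - (n - j)) + 1 + (n - 1 - j) := by omega
  rw [hk, pow_add, pow_add, Equiv.Perm.mul_apply, Equiv.Perm.mul_apply]
  rw [cpow_lt n hn (n - 1 - j) j h1 (by omega)]
  have hnj : ((j + (n - 1 - j) : ℕ) : ZMod n) = ((n - 1 : ℕ) : ZMod n) := by
    congr 1; omega
  rw [hnj, pow_one, c_top n hn]
  have h1' : (1 : ZMod n) = ((1 : ℕ) : ZMod n) := by simp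
  rw [h1', cpow_lt n hn (k - (n - j)) 1 (by omega) (by omega)]
  congr 1
  omega

lemma cpow_order (n : ℕ) (hn : 2 < n) (y : ZMod n) : ((cP n) ^ (n - 1)) y = y := by
  haveI : NeZero n := ⟨by omega⟩
  have hy : ((y.val : ℕ) : ZMod n) = y := ZMod.natCast_rightInverse y
  have hv : y.val < n := ZMod.val_lt y
  rcases Nat.eq_zero_or_pos y.val with h0 | hpos
  · have : y = 0 := by rw [← hy, h0]; simp
    rw [this]; exact cpow_zero n (n - 1) hn
  · rw [← hy, cpow_wrap n hn (n - 1) y.val hpos (by omega) (by omega) (by omega)]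
    congr 1
    omega

lemma dinv_apply (n : ℕ) (y : ZMod n) : (Equiv.addRight (1 : ZMod n))⁻¹ y = y - 1 := by
  simp [Equiv.Perm.inv_def, sub_eq_add_neg]

lemma d_cast (n j : ℕ) (hn : 2 < n) (h1 : 3 ≤ j) (hj : j ≤ n) :
    dP n ((j : ℕ) : ZMod n) = ((j - 1 : ℕ) : ZMod n) := by
  unfold dP
  rw [Equiv.Perm.mul_apply, dinv_apply]
  have : ((j : ℕ) : ZMod n) - 1 = ((j - 1 : ℕ) : ZMod n) := by
    push_cast [Nat.cast_sub (show 1 ≤ j by omega)]; ring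
  rw [this]
  exact swap01_cast n (j - 1) hn (by omega) (by omega)

lemma d_two (n : ℕ) (hn : 2 < n) : dP n (((2 : ℕ) : ZMod n)) = 0 := by
  unfold dP
  rw [Equiv.Perm.mul_apply, dinv_apply]
  have : (((2 : ℕ) : ZMod n) : ZMod n) - 1 = 1 := by push_cast; ring
  rw [this, Equiv.swap_apply_right]

lemma d_one (n : ℕ) (hn : 2 < n) : dP n (1 : ZMod n) = 1 := by
  unfold dP
  rw [Equiv.Perm.mul_apply, dinv_apply]
  have : (1 : ZMod n) - 1 = 0 := by ring
  rw [this, Equiv.swap_apply_left]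

lemma dpow_one (n k : ℕ) (hn : 2 < n) : ((dP n) ^ k) (1 : ZMod n) = 1 := by
  induction k with
  | zero => simp
  | succ k ih => rw [pow_succ', Equiv.Perm.mul_apply, ih, d_one n hn]

lemma dpow_lt (n : ℕ) (hn : 2 < n) (k : ℕ) :
    ∀ j : ℕ, k + 2 ≤ j → j ≤ n → ((dP n) ^ k) ((j : ℕ) : ZMod n) = ((j - k : ℕ) : ZMod n) := by
  induction k with
  | zero => intro j _ _; simp
  | succ k ih =>
    intro j h1 h2
    rw [pow_succ, Equiv.Perm.mul_apply, d_cast n j hn (by omega) h2]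
    rw [ih (j - 1) (by omega) (by omega)]
    congr 1
    omega

lemma dpow_wrap (n : ℕ) (hn : 2 < n) (k j : ℕ) (h1 : 2 ≤ j) (h2 : j ≤ k + 1)
    (h3 : k + 3 ≤ n + j) (hj : j ≤ n) :
    ((dP n) ^ k) ((j : ℕ) : ZMod n) = ((n + j - k - 1 : ℕ) : ZMod n) := by
  have hk : k = (k + 1 - j) + 1 + (j - 2) := by omega
  rw [hk, pow_add, pow_add, Equiv.Perm.mul_apply, Equiv.Perm.mul_apply]
  rw [dpow_lt n hn (j - 2) j (by omega) hj]
  have e2 : ((j - (j - 2) : ℕ) : ZMod n) = ((2 : ℕ) : ZMod n) := by congr 1; omega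
  rw [e2, pow_one, d_two n hn]
  have e0 : (0 : ZMod n) = ((n : ℕ) : ZMod n) := (ZMod.natCast_self n).symm
  rw [e0, dpow_lt n hn (k + 1 - j) n (by omega) le_rfl]
  congr 1
  omega

lemma dpow_order (n : ℕ) (hn : 2 < n) (y : ZMod n) : ((dP n) ^ (n - 1)) y = y := by
  haveI : NeZero n := ⟨by omega⟩
  have hy : ((y.val : ℕ) : ZMod n) = y := ZMod.natCast_rightInverse y
  have hv : y.val < n := ZMod.val_lt y
  rcases Nat.eq_zero_or_pos y.val with h0 | hpos
  · have hy0 : y = 0 := by rw [← hy, h0]; simp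
    rw [hy0]
    have e0 : (0 : ZMod n) = ((n : ℕ) : ZMod n) := (ZMod.natCast_self n).symm
    rw [e0, dpow_wrap n hn (n - 1) n (by omega) (by omega) (by omega) le_rfl]
    rw [show (n + n - (n - 1) - 1 : ℕ) = n by omega, ZMod.natCast_self]
  · rcases eq_or_lt_of_le (show 1 ≤ y.val by omega) with h1 | h1
    · have hy1 : y = 1 := by rw [← hy, ← h1]; simp
      rw [hy1]; exact dpow_one n (n - 1) hn
    · rw [← hy, dpow_wrap n hn (n - 1) y.val (by omega) (by omega) (by omega) (by omega)]
      congr 1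
      omega

/-- The key step lemma for `c`-steps: `c^(2b+1) ∘ W_{2b+1} = W_{2b}`. -/
lemma stepC (n m b : ℕ) (hn : 2 < n) (hm : m = n / 2) (hb : 2 * b + 2 ≤ n - 1) (x : ZMod n) :
    ((cP n) ^ (2 * b + 1)) (WO n m b x) = WE n m b x := by
  haveI : NeZero n := ⟨by omega⟩
  have hmn : 2 * m ≤ n ∧ n ≤ 2 * m + 1 := by omega
  have hbm : b + 1 ≤ m := by omega
  set u : ℕ := n - m - b with hu
  set v : ℕ := (x - ((u : ℕ) : ZMod n)).val with hv
  have hvn : v < n := ZMod.val_lt _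
  have hx : x = ((u : ℕ) : ZMod n) + ((v : ℕ) : ZMod n) := by
    have h := ZMod.natCast_rightInverse (x - ((u : ℕ) : ZMod n))
    rw [← hv] at h
    linear_combination -h
  unfold WO WE
  rw [← hv]
  rcases lt_trichotomy v (2 * b + 1) with hcase | hcase | hcase
  · -- v ≤ 2b : both translations
    rw [if_pos (by omega), if_pos (by omega)]
    have e1 : x + ((m - 1 - b : ℕ) : ZMod n) = ((n + v - 2 * b - 1 : ℕ) : ZMod n) := by
      rw [hx, ← Nat.cast_add, ← Nat.cast_add]
      congr 1
      omega
    rw [e1, cpow_wrap n hn (2 * b + 1) (n + v - 2 * b - 1) (by omega) (by omega) (by omega)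
      (by omega)]
    have e2 : x + ((m + b + 1 : ℕ) : ZMod n) = ((v + 1 : ℕ) : ZMod n) := by
      rw [hx, ← Nat.cast_add, ← Nat.cast_add,
        show (u + v + (m + b + 1) : ℕ) = n + (v + 1) by omega, Nat.cast_add,
        ZMod.natCast_self, zero_add]
    rw [e2]
    congr 1
    omega
  · -- v = 2b+1 : inner hits 0
    rw [if_pos (by omega), if_neg (by omega)]
    have e1 : x + ((m - 1 - b : ℕ) : ZMod n) = 0 := by
      rw [hx, ← Nat.cast_add, ← Nat.cast_add, show (u + v + (m - 1 - b) : ℕ) = n by omega,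
        ZMod.natCast_self]
    rw [e1, cpow_zero n (2 * b + 1) hn]
    rw [hx, hcase]
    push_cast [hu, Nat.cast_sub (show b ≤ n - m by omega), Nat.cast_sub (show m ≤ n by omega),
      ZMod.natCast_self]
    ring
  · -- v ≥ 2b+2 : both reflections
    rw [if_neg (by omega), if_neg (by omega)]
    have e1 : ((u : ℕ) : ZMod n) - x = ((n - v : ℕ) : ZMod n) := by
      rw [hx]
      push_cast [Nat.cast_sub (show v ≤ n by omega), Nat.cast_sub (show b ≤ n - m by omega),
        Nat.cast_sub (show m ≤ n by omega), ZMod.natCast_self]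
      ring
    rw [e1, cpow_lt n hn (2 * b + 1) (n - v) (by omega) (by omega)]
    rw [hx]
    push_cast [hu, Nat.cast_sub (show v ≤ n by omega), Nat.cast_sub (show b ≤ n - m by omega),
      Nat.cast_sub (show m ≤ n by omega), ZMod.natCast_self]
    ring

/-- The key step lemma for `d`-steps: `d^(2b+2) ∘ W_{2b+2} = W_{2b+1}`. -/
lemma stepD (n m b : ℕ) (hn : 2 < n) (hm : m = n / 2) (hb : 2 * b + 3 ≤ n - 1) (x : ZMod n) :
    ((dP n) ^ (2 * b + 2)) (WE n m (b + 1) x) = WO n m b x := by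
  haveI : NeZero n := ⟨by omega⟩
  have hmn : 2 * m ≤ n ∧ n ≤ 2 * m + 1 := by omega
  have hbm : b + 2 ≤ m := by omega
  set u : ℕ := n - m - b with hu
  have hu2 : (n - m - (b + 1) : ℕ) = u - 1 := by omega
  set v : ℕ := (x - ((u : ℕ) : ZMod n)).val with hv
  have hvn : v < n := ZMod.val_lt _
  have hx : x = ((u : ℕ) : ZMod n) + ((v : ℕ) : ZMod n) := by
    have h := ZMod.natCast_rightInverse (x - ((u : ℕ) : ZMod n))
    rw [← hv] at h
    linear_combination -h
  have hshift : x - (((u - 1 : ℕ)) : ZMod n) = ((v + 1 : ℕ) : ZMod n) := by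
    rw [hx]
    push_cast [Nat.cast_sub (show 1 ≤ u by omega)]
    ring
  unfold WE WO
  rw [hu2, hshift, ← hv]
  by_cases hcase : v ≤ 2 * b + 1
  · -- v ≤ 2b+1 : both translations
    have hval : ((v + 1 : ℕ) : ZMod n).val = v + 1 := ZMod.val_cast_of_lt (by omega)
    rw [if_pos (by rw [hval]; omega), if_pos (by omega)]
    have e1 : x + ((m + (b + 1) + 1 : ℕ) : ZMod n) = ((v + 2 : ℕ) : ZMod n) := by
      rw [hx, ← Nat.cast_add, ← Nat.cast_add,
        show (u + v + (m + (b + 1) + 1) : ℕ) = n + (v + 2) by omega, Nat.cast_add,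
        ZMod.natCast_self, zero_add]
    rw [e1, dpow_wrap n hn (2 * b + 2) (v + 2) (by omega) (by omega) (by omega) (by omega)]
    have e2 : x + ((m - 1 - b : ℕ) : ZMod n) = ((n + v - 2 * b - 1 : ℕ) : ZMod n) := by
      rw [hx, ← Nat.cast_add, ← Nat.cast_add]
      congr 1
      omega
    rw [e2]
    congr 1
    omega
  · by_cases htop : v = n - 1
    · -- v = n-1 : wrap into the translation window
      have hv1 : ((v + 1 : ℕ) : ZMod n) = 0 := by
        rw [show (v + 1 : ℕ) = n by omega, ZMod.natCast_self]
      rw [hv1]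
      rw [if_pos (by rw [ZMod.val_zero]; omega), if_neg (by omega)]
      have e1 : x + ((m + (b + 1) + 1 : ℕ) : ZMod n) = 1 := by
        rw [hx, ← Nat.cast_add, ← Nat.cast_add,
          show (u + v + (m + (b + 1) + 1) : ℕ) = 2 * n + 1 by omega]
        push_cast [ZMod.natCast_self]
        ring
      rw [e1, dpow_one n (2 * b + 2) hn]
      rw [hx, htop]
      push_cast [hu, Nat.cast_sub (show 1 ≤ n by omega), Nat.cast_sub (show b ≤ n - m by omega),
        Nat.cast_sub (show m ≤ n by omega), ZMod.natCast_self]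
      ring
    · -- 2b+2 ≤ v ≤ n-2 : both reflections
      have hval : ((v + 1 : ℕ) : ZMod n).val = v + 1 := ZMod.val_cast_of_lt (by omega)
      rw [if_neg (by rw [hval]; omega), if_neg (by omega)]
      have e1 : (((b + 1 + 1 : ℕ) : ZMod n) - (m : ZMod n)) - x
          = ((n + 2 * b + 2 - v : ℕ) : ZMod n) := by
        rw [hx]
        push_cast [hu, Nat.cast_sub (show v ≤ n + 2 * b + 2 by omega),
          Nat.cast_sub (show b ≤ n - m by omega), Nat.cast_sub (show m ≤ n by omega),
          ZMod.natCast_self]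
        ring
      rw [e1, dpow_lt n hn (2 * b + 2) (n + 2 * b + 2 - v) (by omega) (by omega)]
      have e2 : ((u : ℕ) : ZMod n) - x = ((n - v : ℕ) : ZMod n) := by
        rw [hx]
        push_cast [Nat.cast_sub (show v ≤ n by omega), Nat.cast_sub (show b ≤ n - m by omega),
          Nat.cast_sub (show m ≤ n by omega), ZMod.natCast_self]
        ring
      rw [e2]
      congr 1
      omega

/-- `W_0` is the target reflection `x ↦ (1 - m) - x`. -/
lemma WE_zero (n m : ℕ) (hn : 2 < n) (hm : m ≤ n) (x : ZMod n) :
    WE n m 0 x = (1 : ZMod n) - (m : ZMod n) - x := by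
  haveI : NeZero n := ⟨by omega⟩
  unfold WE
  have hn0 : ((n : ℕ) : ZMod n) = 0 := ZMod.natCast_self n
  by_cases h : (x - ((n - m - 0 : ℕ) : ZMod n)).val ≤ 2 * 0
  · rw [if_pos h]
    have hx0 : x - ((n - m - 0 : ℕ) : ZMod n) = 0 := by
      have := ZMod.natCast_rightInverse (x - ((n - m - 0 : ℕ) : ZMod n))
      rw [show (x - ((n - m - 0 : ℕ) : ZMod n)).val = 0 by omega] at this
      rw [← this]; simp
    have hx : x = ((n - m - 0 : ℕ) : ZMod n) := by
      have := sub_eq_zero.mp hx0; exact this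
    rw [hx]
    push_cast [Nat.sub_zero, Nat.cast_sub (show m ≤ n by omega), ZMod.natCast_self]
    ring
  · rw [if_neg h]
    push_cast
    ring

/-- Terminal case, `n` even: `W_{2m-2} = id`. -/
lemma WE_last (n m : ℕ) (hn : 2 < n) (heq : n = 2 * m) (x : ZMod n) :
    WE n m (m - 1) x = x := by
  haveI : NeZero n := ⟨by omega⟩
  have hm1 : 1 ≤ m := by omega
  have hu : (n - m - (m - 1) : ℕ) = 1 := by omega
  unfold WE
  rw [hu]
  have hn0 : ((n : ℕ) : ZMod n) = 0 := ZMod.natCast_self n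
  by_cases h : (x - ((1 : ℕ) : ZMod n)).val ≤ 2 * (m - 1)
  · rw [if_pos h]
    rw [show (m + (m - 1) + 1 : ℕ) = n by omega, hn0]
    ring
  · rw [if_neg h]
    -- then (x - 1).val = n - 1, so x = 0
    have hvn : (x - ((1 : ℕ) : ZMod n)).val < n := ZMod.val_lt _
    have hveq : (x - ((1 : ℕ) : ZMod n)).val = n - 1 := by omega
    have hx : x = 0 := by
      have h2 := ZMod.natCast_rightInverse (x - ((1 : ℕ) : ZMod n))
      rw [hveq] at h2
      have : x = ((n - 1 : ℕ) : ZMod n) + ((1 : ℕ) : ZMod n) := by rw [h2]; ring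
      rw [this, ← Nat.cast_add, show (n - 1 + 1 : ℕ) = n by omega, hn0]
    rw [hx, show (m - 1 + 1 : ℕ) = m by omega]
    ring

/-- Terminal case, `n` odd: `W_{2m-1} = id`. -/
lemma WO_last (n m : ℕ) (hn : 2 < n) (heq : n = 2 * m + 1) (x : ZMod n) :
    WO n m (m - 1) x = x := by
  haveI : NeZero n := ⟨by omega⟩
  have hm1 : 1 ≤ m := by omega
  have hu : (n - m - (m - 1) : ℕ) = 2 := by omega
  unfold WO
  rw [hu]
  have hn0 : ((n : ℕ) : ZMod n) = 0 := ZMod.natCast_self n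
  by_cases h : (x - ((2 : ℕ) : ZMod n)).val ≤ 2 * (m - 1) + 1
  · rw [if_pos h]
    rw [show (m - 1 - (m - 1) : ℕ) = 0 by omega]
    push_cast
    ring
  · rw [if_neg h]
    have hvn : (x - ((2 : ℕ) : ZMod n)).val < n := ZMod.val_lt _
    have hveq : (x - ((2 : ℕ) : ZMod n)).val = n - 1 := by omega
    have hx : x = 1 := by
      have h2 := ZMod.natCast_rightInverse (x - ((2 : ℕ) : ZMod n))
      rw [hveq] at h2
      have : x = ((n - 1 : ℕ) : ZMod n) + ((2 : ℕ) : ZMod n) := by rw [h2]; ring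
      rw [this, ← Nat.cast_add, show (n - 1 + 2 : ℕ) = n + 1 by omega]
      push_cast [hn0]
      ring
    rw [hx]
    push_cast
    ring

lemma Rpow (n m : ℕ) (x : ZMod n) :
    ((Equiv.subRight (1 : ZMod n)) ^ m) x = x - (m : ZMod n) := by
  induction m generalizing x with
  | zero => simp
  | succ m ih =>
    rw [pow_succ, Equiv.Perm.mul_apply, Equiv.subRight_apply, ih (x - 1)]
    push_cast
    ring

end LRXAux

open LRXAux in
/-- For `n > 2`, `m = ⌊n/2⌋`, `δ = 1` if `n` is even and `0`
otherwise, the permutation `ℓ_n : i ↦ 1 - i` of `ZMod n` admits the explicit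
factorization
`ℓ_n = (∏_{i=1}^{m−δ} (X · L^{(−1)^{i−1}})^i) · (∏_{i=m−1}^{1} (L^{(−1)^{i−δ}} · X)^i) · R^m`
into LRX generators (the first product over `i = 1, …, m−δ`, the second over
`i = m−1, …, 1`, with `L⁻¹ = R`), and the total number of generator letters is
`(m−δ)(m−δ+1) + m(m−1) + m = n(n−1)/2`. -/
theorem longest_element_explicit_factorization (n : ℕ) (hn : 2 < n)
    (m δ : ℕ) (hm : m = n / 2) (hδ : δ = if Even n then 1 else 0) :
    Equiv.subLeft (1 : ZMod n) =
      (((List.range (m - δ)).map fun j =>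
          (Equiv.swap (0 : ZMod n) 1 *
            (Equiv.addRight (1 : ZMod n)) ^ ((-1 : ℤ) ^ j)) ^ (j + 1)).prod) *
      (((List.range (m - 1)).map fun j =>
          ((Equiv.addRight (1 : ZMod n)) ^ ((-1 : ℤ) ^ (m - 1 - j - δ)) *
            Equiv.swap (0 : ZMod n) 1) ^ (m - 1 - j)).prod) *
      (Equiv.subRight (1 : ZMod n)) ^ m ∧
    (m - δ) * (m - δ + 1) + m * (m - 1) + m = n * (n - 1) / 2 := by
  haveI : NeZero n := ⟨by omega⟩
  have key : (δ = 1 ∧ n = 2 * m) ∨ (δ = 0 ∧ n = 2 * m + 1) := by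
    rcases Nat.even_or_odd n with h | h
    · left
      constructor
      · rw [hδ, if_pos h]
      · obtain ⟨t, ht⟩ := h; omega
    · right
      constructor
      · have hne : ¬ Even n := by
          rw [Nat.even_iff]; rw [Nat.odd_iff] at h; omega
        rw [hδ, if_neg hne]
      · obtain ⟨t, ht⟩ := h; omega
  set f1 : ℕ → Equiv.Perm (ZMod n) := fun j =>
    (Equiv.swap (0 : ZMod n) 1 * (Equiv.addRight (1 : ZMod n)) ^ ((-1 : ℤ) ^ j)) ^ (j + 1)
    with hf1
  set f2 : ℕ → Equiv.Perm (ZMod n) := fun j =>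
    ((Equiv.addRight (1 : ZMod n)) ^ ((-1 : ℤ) ^ (m - 1 - j - δ)) *
      Equiv.swap (0 : ZMod n) 1) ^ (m - 1 - j)
    with hf2
  -- step identity for the first product
  have step1 : ∀ r, r + 1 ≤ m - δ → ∀ x : ZMod n,
      f1 r (Wgen n m (r + 1) x) = Wgen n m r x := by
    intro r hr x
    rcases Nat.even_or_odd r with ⟨b, hb⟩ | ⟨b, hb⟩
    · have hr2 : r = 2 * b := by omega
      subst hr2
      rw [hf1]
      simp only
      rw [Even.neg_one_pow ⟨b, by ring⟩, zpow_one]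
      rw [Wgen_odd n m b, Wgen_even n m b]
      exact stepC n m b hn hm (by omega) x
    · have hr2 : r = 2 * b + 1 := by omega
      subst hr2
      rw [hf1]
      simp only
      rw [Odd.neg_one_pow ⟨b, by ring⟩, zpow_neg_one]
      rw [show (2 * b + 1 + 1 : ℕ) = 2 * (b + 1) by ring, Wgen_even n m (b + 1),
        Wgen_odd n m b]
      exact stepD n m b hn hm (by omega) x
  -- step identity for the second product
  have step2 : ∀ j, j + 1 ≤ m - 1 → ∀ x : ZMod n,
      f2 j (Wgen n m (m - δ + j + 1) x) = Wgen n m (m - δ + j) x := by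
    intro j hj x
    set r : ℕ := m - δ + j with hrdef
    rcases Nat.even_or_odd r with ⟨b, hb⟩ | ⟨b, hb⟩
    · -- r = 2b even : c-case
      have hr2 : r = 2 * b := by omega
      have hpar : Odd (m - 1 - j - δ) := by
        rw [Nat.odd_iff]
        omega
      have hk : (m - 1 - j) + (2 * b + 1) = n - 1 := by omega
      rw [hf2]
      simp only
      rw [Odd.neg_one_pow hpar, zpow_neg_one]
      have hcinv : (Equiv.addRight (1 : ZMod n))⁻¹ * Equiv.swap (0 : ZMod n) 1
          = (cP n)⁻¹ := by
        unfold cP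
        rw [mul_inv_rev, Equiv.swap_inv]
      rw [hcinv, inv_pow]
      rw [show r + 1 = 2 * b + 1 from by omega, Wgen_odd n m b,
        show r = 2 * b from hr2, Wgen_even n m b]
      apply ((cP n) ^ (m - 1 - j)).injective
      rw [Equiv.Perm.coe_inv, Equiv.apply_symm_apply]
      rw [← stepC n m b hn hm (by omega) x]
      rw [← Equiv.Perm.mul_apply, ← pow_add, hk]
      exact (cpow_order n hn _).symm
    · -- r = 2b+1 odd : d-case
      have hr2 : r = 2 * b + 1 := by omega
      have hpar : Even (m - 1 - j - δ) := by
        rw [Nat.even_iff]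
        omega
      have hk : (m - 1 - j) + (2 * b + 2) = n - 1 := by omega
      rw [hf2]
      simp only
      rw [Even.neg_one_pow hpar, zpow_one]
      have hdinv : (Equiv.addRight (1 : ZMod n)) * Equiv.swap (0 : ZMod n) 1
          = (dP n)⁻¹ := by
        unfold dP
        rw [mul_inv_rev, Equiv.swap_inv, inv_inv]
      rw [hdinv, inv_pow]
      rw [show r + 1 = 2 * (b + 1) from by omega, Wgen_even n m (b + 1),
        show r = 2 * b + 1 from hr2, Wgen_odd n m b]
      apply ((dP n) ^ (m - 1 - j)).injective
      rw [Equiv.Perm.coe_inv, Equiv.apply_symm_apply]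
      rw [← stepD n m b hn hm (by omega) x]
      rw [← Equiv.Perm.mul_apply, ← pow_add, hk]
      exact (dpow_order n hn _).symm
  -- prefix products of the first product
  have main1 : ∀ r, r ≤ m - δ → ∀ x : ZMod n,
      (((List.range r).map f1).prod) (Wgen n m r x) = WE n m 0 x := by
    intro r
    induction r with
    | zero =>
      intro _ x
      rw [show (0 : ℕ) = 2 * 0 from rfl, Wgen_even n m 0, List.range_zero, List.map_nil,
        List.prod_nil, Equiv.Perm.one_apply]
    | succ r ih =>
      intro hr x
      rw [List.range_succ, List.map_append, List.prod_append, List.map_singleton,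
        List.prod_singleton, Equiv.Perm.mul_apply, step1 r hr x]
      exact ih (by omega) x
  -- prefix products of the second product
  have main2 : ∀ j, j ≤ m - 1 → ∀ x : ZMod n,
      (((List.range j).map f2).prod) (Wgen n m (m - δ + j) x) = Wgen n m (m - δ) x := by
    intro j
    induction j with
    | zero =>
      intro _ x
      rw [List.range_zero, List.map_nil, List.prod_nil, Equiv.Perm.one_apply, Nat.add_zero]
    | succ j ih =>
      intro hj x
      rw [List.range_succ, List.map_append, List.prod_append, List.map_singleton,
        List.prod_singleton, Equiv.Perm.mul_apply,
        show m - δ + (j + 1) = m - δ + j + 1 from by omega, step2 j hj x]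
      exact ih (by omega) x
  constructor
  · apply Equiv.ext
    intro x
    rw [Equiv.subLeft_apply, Equiv.Perm.mul_apply, Equiv.Perm.mul_apply, Rpow n m x]
    set y : ZMod n := x - (m : ZMod n) with hy
    have hlast : Wgen n m (m - δ + (m - 1)) y = y := by
      rcases key with ⟨hd, he⟩ | ⟨hd, he⟩
      · rw [show m - δ + (m - 1) = 2 * (m - 1) from by omega, Wgen_even n m (m - 1)]
        exact WE_last n m hn he y
      · rw [show m - δ + (m - 1) = 2 * (m - 1) + 1 from by omega, Wgen_odd n m (m - 1)]
        exact WO_last n m hn he y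
    have h2 := main2 (m - 1) le_rfl y
    rw [hlast] at h2
    rw [h2]
    have h1 := main1 (m - δ) le_rfl y
    rw [h1, WE_zero n m hn (by omega) y, hy]
    ring
  · rcases key with ⟨hd, he⟩ | ⟨hd, he⟩
    · subst hd
      obtain ⟨m', rfl⟩ : ∃ m', m = m' + 1 := ⟨m - 1, by omega⟩
      have h2 : n * (n - 1) = 2 * ((m' + 1) * (2 * m' + 1)) := by
        rw [he, show 2 * (m' + 1) - 1 = 2 * m' + 1 from by omega]; ring
      rw [h2, Nat.mul_div_cancel_left _ (by norm_num)]
      simp only [Nat.add_sub_cancel]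
      ring
    · subst hd
      obtain ⟨m', rfl⟩ : ∃ m', m = m' + 1 := ⟨m - 1, by omega⟩
      have h2 : n * (n - 1) = 2 * ((m' + 1) * (2 * m' + 3)) := by
        rw [he, show 2 * (m' + 1) + 1 - 1 = 2 * (m' + 1) from by omega]; ring
      rw [h2, Nat.mul_div_cancel_left _ (by norm_num)]
      simp only [Nat.sub_zero, Nat.add_sub_cancel]
      ring
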